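/- Let L : ℝ^d → ℝ^e be a quasi-isomorphism between the finite linear groups G and H. Then for every g ∈ G the composite linear map L ∘ g ∘ L⁻¹ belongs to H, and the map g ↦ L ∘ g ∘ L⁻¹ is a group isomorphism from G onto H; in particular, L is equivariant with respect to this isomorphism (L(g·v) = (L ∘ g ∘ L⁻¹)(L·v) for all g ∈ G, v ∈ ℝ^d). -/

import Mathlib

open Matrix MvPolynomial

noncomputable section

/-- Action of an invertible real matrix on a vector in `ℝ^d`. -/
def act {d : ℕ} (g : GL (Fin d) ℝ) (v : Fin d → ℝ) : Fin d → ℝ :=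
  (g : Matrix (Fin d) (Fin d) ℝ).mulVec v

/-- Orbit of a vector under a subgroup of `GL (Fin d) ℝ`. -/
def orbitOf {d : ℕ} (G : Subgroup (GL (Fin d) ℝ)) (v : Fin d → ℝ) : Set (Fin d → ℝ) :=
  {x | ∃ g ∈ G, act g v = x}

/-- A quasi-isomorphism: a linear isomorphism sending `G`-orbits to `H`-orbits,
whose inverse sends `H`-orbits to `G`-orbits. -/
def IsQuasiIso {d e : ℕ} (G : Subgroup (GL (Fin d) ℝ)) (H : Subgroup (GL (Fin e) ℝ))
    (L : (Fin d → ℝ) ≃ₗ[ℝ] (Fin e → ℝ)) : Prop :=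
  (∀ v : Fin d → ℝ, ∃ w : Fin e → ℝ, ⇑L '' orbitOf G v = orbitOf H w) ∧
  (∀ w : Fin e → ℝ, ∃ v : Fin d → ℝ, ⇑L.symm '' orbitOf H w = orbitOf G v)

/-- `P` is a `G`-invariant polynomial. -/
def IsInv {d : ℕ} (G : Subgroup (GL (Fin d) ℝ)) (P : MvPolynomial (Fin d) ℝ) : Prop :=
  ∀ g ∈ G, ∀ v : Fin d → ℝ, eval (act g v) P = eval v P

/-- The polynomial map `ℝ^d → ℝ^m` given by a family of polynomials. -/
def evalMap {d m : ℕ} (p : Fin m → MvPolynomial (Fin d) ℝ) (v : Fin d → ℝ) : Fin m → ℝ :=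
  fun i => eval v (p i)

/-- Real Zariski closure of a subset of `ℝ^m`: the common zero set of all real
polynomials vanishing identically on `S`. -/
def zarClosure {m : ℕ} (S : Set (Fin m → ℝ)) : Set (Fin m → ℝ) :=
  {y | ∀ P : MvPolynomial (Fin m) ℝ, (∀ s ∈ S, eval s P = 0) → eval y P = 0}

/-- `G` contains no reflections: every nonidentity element `g` has `rank (g - 1) ≥ 2`. -/
def NoReflections {d : ℕ} (G : Subgroup (GL (Fin d) ℝ)) : Prop :=
  ∀ g ∈ G, g ≠ 1 → 2 ≤ ((g : Matrix (Fin d) (Fin d) ℝ) - 1).rank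

/- ### Auxiliary lemmas -/

lemma act_one {d : ℕ} (v : Fin d → ℝ) : act (1 : GL (Fin d) ℝ) v = v := by
  simp [act]

lemma act_mul {d : ℕ} (g h : GL (Fin d) ℝ) (v : Fin d → ℝ) :
    act (g * h) v = act g (act h v) := by
  simp [act, Matrix.mulVec_mulVec]

lemma act_injective {d : ℕ} :
    Function.Injective fun g : GL (Fin d) ℝ => (act g : (Fin d → ℝ) → Fin d → ℝ) := by
  intro g h hgh
  apply Units.ext
  ext i j
  have := congrFun (congrFun hgh (Pi.single j 1)) i
  simpa [act, Matrix.mulVec_single] using this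

/-- Key lemma: one half of the quasi-iso condition produces a global conjugating element
for each `g ∈ G`. -/
lemma exists_conj {d e : ℕ} (G : Subgroup (GL (Fin d) ℝ)) (H : Subgroup (GL (Fin e) ℝ))
    [Finite H] (L : (Fin d → ℝ) ≃ₗ[ℝ] (Fin e → ℝ))
    (hL : ∀ v : Fin d → ℝ, ∃ w : Fin e → ℝ, ⇑L '' orbitOf G v = orbitOf H w)
    (g : GL (Fin d) ℝ) (hg : g ∈ G) :
    ∃ h ∈ H, ∀ v : Fin d → ℝ, L (act g v) = act h (L v) := by
  -- pointwise version
  have pt : ∀ v : Fin d → ℝ, ∃ h : H, L (act g v) = act (h : GL (Fin e) ℝ) (L v) := by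
    intro v
    obtain ⟨w, hw⟩ := hL v
    have h1 : L v ∈ orbitOf H w := hw ▸ ⟨v, ⟨1, G.one_mem, act_one v⟩, rfl⟩
    have h2 : L (act g v) ∈ orbitOf H w := hw ▸ ⟨act g v, ⟨g, hg, rfl⟩, rfl⟩
    obtain ⟨h1', hh1, e1⟩ := h1
    obtain ⟨h2', hh2, e2⟩ := h2
    refine ⟨⟨h2' * h1'⁻¹, H.mul_mem hh2 (H.inv_mem hh1)⟩, ?_⟩
    rw [← e2, ← e1, ← act_mul]
    group
  -- kernels of the linear maps `L ∘ g - h ∘ L`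
  let K : H → Submodule ℝ (Fin d → ℝ) := fun h =>
    LinearMap.ker (L.toLinearMap ∘ₗ Matrix.mulVecLin (g : Matrix (Fin d) (Fin d) ℝ)
      - Matrix.mulVecLin (((h : GL (Fin e) ℝ) : Matrix (Fin e) (Fin e) ℝ)) ∘ₗ L.toLinearMap)
  have hcover : ⋃ h : H, (K h : Set (Fin d → ℝ)) = Set.univ := by
    ext v
    simp only [Set.mem_iUnion, Set.mem_univ, iff_true]
    obtain ⟨h, hv⟩ := pt v
    refine ⟨h, ?_⟩
    simp only [K, SetLike.mem_coe, LinearMap.mem_ker, LinearMap.sub_apply,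
      LinearMap.comp_apply, Matrix.mulVecLin_apply, LinearEquiv.coe_coe, sub_eq_zero]
    exact hv
  obtain ⟨h, hh⟩ := Subspace.exists_eq_top_of_iUnion_eq_univ hcover
  refine ⟨h, h.2, fun v => ?_⟩
  have hv : v ∈ K h := hh ▸ Submodule.mem_top
  simpa only [K, LinearMap.mem_ker, LinearMap.sub_apply, LinearMap.comp_apply,
    Matrix.mulVecLin_apply, LinearEquiv.coe_coe, sub_eq_zero, act] using hv

/-- a quasi-isomorphism conjugates `G` onto `H` and is equivariant
with respect to the resulting group isomorphism. -/
theorem stmt_0 (d e : ℕ) (G : Subgroup (GL (Fin d) ℝ)) (H : Subgroup (GL (Fin e) ℝ))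
    [Finite G] [Finite H]
    (L : (Fin d → ℝ) ≃ₗ[ℝ] (Fin e → ℝ)) (hL : IsQuasiIso G H L) :
    (∀ g ∈ G, ∃ h ∈ H, ∀ w : Fin e → ℝ, L (act g (L.symm w)) = act h w) ∧
    ∃ φ : G ≃* H, ∀ (g : G) (v : Fin d → ℝ),
      L (act (g : GL (Fin d) ℝ) v) = act ((φ g : GL (Fin e) ℝ)) (L v) := by
  have key1 : ∀ g ∈ G, ∃ h ∈ H, ∀ v : Fin d → ℝ, L (act g v) = act h (L v) :=
    fun g hg => exists_conj G H L hL.1 g hg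
  have key2 : ∀ h ∈ H, ∃ g ∈ G, ∀ w : Fin e → ℝ, L.symm (act h w) = act g (L.symm w) :=
    fun h hh => exists_conj H G L.symm hL.2 h hh
  choose f hf hfe using fun g : G => key1 g g.2
  choose f' hf' hfe' using fun h : H => key2 h h.2
  refine ⟨fun g hg => ?_, ?_⟩
  · obtain ⟨h, hh, hconj⟩ := key1 g hg
    exact ⟨h, hh, fun w => by rw [hconj, L.apply_symm_apply]⟩
  · set φ0 : G → H := fun g => ⟨f g, hf g⟩ with hφ0
    set ψ0 : H → G := fun h => ⟨f' h, hf' h⟩ with hψ0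
    have left : ∀ g : G, ψ0 (φ0 g) = g := by
      intro g
      apply Subtype.ext
      apply act_injective
      funext v
      have h1 := hfe' (φ0 g) (L v)
      have h2 := hfe g v
      simp only [hφ0] at h1
      rw [← h2] at h1
      simp only [LinearEquiv.symm_apply_apply] at h1
      exact h1.symm
    have right : ∀ h : H, φ0 (ψ0 h) = h := by
      intro h
      apply Subtype.ext
      apply act_injective
      funext w
      have h1 := hfe (ψ0 h) (L.symm w)
      have h2 := hfe' h w
      simp only [hψ0] at h1
      rw [← h2] at h1
      rw [L.apply_symm_apply, L.apply_symm_apply] at h1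
      exact h1.symm
    have hmul : ∀ g g' : G, φ0 (g * g') = φ0 g * φ0 g' := by
      intro g g'
      apply Subtype.ext
      have key : ∀ v : Fin d → ℝ,
          act (f (g * g')) (L v) = act (f g * f g') (L v) := by
        intro v
        have h1 := hfe (g * g') v
        have h2 := hfe g (act (g' : GL (Fin d) ℝ) v)
        have h3 := hfe g' v
        rw [Subgroup.coe_mul, act_mul] at h1
        rw [act_mul, ← h1, h2, h3]
      apply act_injective
      funext w
      have := key (L.symm w)
      rwa [L.apply_symm_apply] at this
    refine ⟨MulEquiv.mk ⟨φ0, ψ0, left, right⟩ hmul, fun g v => ?_⟩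
    exact hfe g v

end
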